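/- Let u₁(t) = e^{tΔ} f with f̂ ∈ L¹(ℝ^d), and define A₂(f)(t) = ∫₀ᵗ e^{(t−τ)Δ} Σᵢ (∂ᵢ e^{τΔ}f)² dτ. Then the Fourier transform of A₂(f)(t) at ξ equals −Σᵢ ∫_{ℝ^d} ηᵢ(ξᵢ−ηᵢ) f̂(ξ−η) f̂(η) · e^{−t|ξ|²} · (1 − e^{−t(|η|²+|ξ−η|²−|ξ|²)})/(|η|²+|ξ−η|²−|ξ|²) dη, and since Σᵢ ηᵢ(ξᵢ−ηᵢ) = η·(ξ−η) and |η|²+|ξ−η|²−|ξ|² = −2η·(ξ−η), this simplifies to (1/2) ∫ f̂(ξ−η) f̂(η) e^{−t|ξ|²} (1 − e^{2tη·(ξ−η)}) dη. -/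

import Mathlib

set_option maxHeartbeats 1000000

open MeasureTheory RealInnerProductSpace

private lemma stmt10_part1 (d : ℕ) (t : ℝ) (ξ η : EuclideanSpace ℝ (Fin d)) :
      (∫ τ in (0:ℝ)..t, Real.exp (-(t-τ) * ‖ξ‖^2) * (-(⟪η, ξ - η⟫)) *
          Real.exp (-τ * (‖η‖^2 + ‖ξ - η‖^2))) =
        (1/2) * Real.exp (-t * ‖ξ‖^2) * (1 - Real.exp (2*t*⟪η, ξ - η⟫)) := by
  set a : ℝ := ⟪η, ξ - η⟫ with ha
  have hs : ‖η‖^2 + ‖ξ - η‖^2 = ‖ξ‖^2 - 2*a := by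
    have h1 : ‖ξ - η‖^2 = ‖ξ‖^2 - 2*⟪ξ,η⟫ + ‖η‖^2 := by
      rw [@norm_sub_sq_real (EuclideanSpace ℝ (Fin d))]
    have h2 : a = ⟪η,ξ⟫ - ‖η‖^2 := by
      rw [ha, inner_sub_right, real_inner_self_eq_norm_sq]
    rw [h1, h2, real_inner_comm ξ η]; ring
  have heq : ∀ τ : ℝ, Real.exp (-(t-τ) * ‖ξ‖^2) * (-a) *
      Real.exp (-τ * (‖η‖^2 + ‖ξ - η‖^2)) = -a * Real.exp (-t * ‖ξ‖^2 + 2*a*τ) := by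
    intro τ
    rw [hs, show Real.exp (-(t-τ) * ‖ξ‖^2) * (-a) * Real.exp (-τ * (‖ξ‖^2 - 2*a))
      = -a * (Real.exp (-(t-τ) * ‖ξ‖^2) * Real.exp (-τ * (‖ξ‖^2 - 2*a))) by ring,
      ← Real.exp_add]
    congr 2
    ring
  rw [intervalIntegral.integral_congr (g := fun τ => -a * Real.exp (-t * ‖ξ‖^2 + 2*a*τ))
    (fun τ _ => heq τ)]
  have hderiv : ∀ τ ∈ Set.uIcc (0:ℝ) t, HasDerivAt
      (fun τ : ℝ => -(1/2) * Real.exp (-t * ‖ξ‖^2 + 2*a*τ))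
      (-a * Real.exp (-t * ‖ξ‖^2 + 2*a*τ)) τ := by
    intro τ _
    have h1 : HasDerivAt (fun τ : ℝ => -t * ‖ξ‖^2 + 2*a*τ) (2*a) τ := by
      simpa only [mul_one, id_eq] using ((hasDerivAt_id τ).const_mul (2*a)).const_add (-t * ‖ξ‖^2)
    have := (h1.exp).const_mul (-(1/2) : ℝ)
    refine this.congr_deriv ?_
    ring
  rw [intervalIntegral.integral_eq_sub_of_hasDerivAt hderiv ((Continuous.intervalIntegrable (by fun_prop) 0 t))]
  rw [Real.exp_add]
  simp [Real.exp_add]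
  ring

private lemma stmt10_part2 (d : ℕ) (t : ℝ) (ht : 0 ≤ t) (F : EuclideanSpace ℝ (Fin d) → ℂ)
      (ξ : EuclideanSpace ℝ (Fin d))
      (hI : IntegrableOn (fun p : ℝ × EuclideanSpace ℝ (Fin d) =>
          ‖F (ξ - p.2)‖ * ‖F p.2‖ * |⟪p.2, ξ - p.2⟫| *
            Real.exp (-p.1 * (‖p.2‖^2 + ‖ξ - p.2‖^2)))
        (Set.Ioc 0 t ×ˢ Set.univ) (volume.prod volume)) :
      (∫ τ in (0:ℝ)..t, ((Real.exp (-(t-τ) * ‖ξ‖^2) : ℝ) : ℂ) *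
          ∫ η, ((-(⟪η, ξ - η⟫) : ℝ) : ℂ) * F (ξ - η) * F η *
            ((Real.exp (-τ * (‖η‖^2 + ‖ξ - η‖^2)) : ℝ) : ℂ)) =
        ∫ η, ((1/2 : ℝ) : ℂ) * F (ξ - η) * F η *
          ((Real.exp (-t * ‖ξ‖^2) : ℝ) : ℂ) *
          ((1:ℂ) - ((Real.exp (2*t*⟪η, ξ - η⟫) : ℝ) : ℂ)) := by
  rcases eq_or_lt_of_le ht with h0 | h0
  · -- t = 0
    subst h0
    simp [intervalIntegral.integral_same]
  set P : EuclideanSpace ℝ (Fin d) → ℂ := fun η => ((-(⟪η, ξ - η⟫) : ℝ) : ℂ) * F (ξ - η) * F η with hP_def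
  by_cases hP : AEStronglyMeasurable P (volume : Measure (EuclideanSpace ℝ (Fin d)))
  · -- measurable case: Fubini
    set G : ℝ × EuclideanSpace ℝ (Fin d) → ℂ := fun p => ((Real.exp (-(t-p.1) * ‖ξ‖^2) : ℝ) : ℂ) *
        (P p.2 * ((Real.exp (-p.1 * (‖p.2‖^2 + ‖ξ - p.2‖^2)) : ℝ) : ℂ)) with hG_def
    have hmeas : AEStronglyMeasurable G
        (((volume : Measure ℝ).restrict (Set.Ioc 0 t)).prod (volume : Measure (EuclideanSpace ℝ (Fin d)))) := by
      apply AEStronglyMeasurable.mul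
      · apply Continuous.aestronglyMeasurable
        fun_prop
      · apply AEStronglyMeasurable.mul
        · exact (hP.comp_quasiMeasurePreserving
            (Measure.quasiMeasurePreserving_snd))
        · apply Continuous.aestronglyMeasurable
          fun_prop
    have hmu : ((volume : Measure ℝ).restrict (Set.Ioc 0 t)).prod (volume : Measure (EuclideanSpace ℝ (Fin d)))
        = ((volume : Measure ℝ).prod (volume : Measure (EuclideanSpace ℝ (Fin d)))).restrict
            (Set.Ioc 0 t ×ˢ Set.univ) := by
      rw [← Measure.prod_restrict, Measure.restrict_univ]
    have hGint : Integrable G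
        (((volume : Measure ℝ).restrict (Set.Ioc 0 t)).prod (volume : Measure (EuclideanSpace ℝ (Fin d)))) := by
      apply Integrable.mono' (g := fun p : ℝ × EuclideanSpace ℝ (Fin d) =>
        ‖F (ξ - p.2)‖ * ‖F p.2‖ * |⟪p.2, ξ - p.2⟫| *
          Real.exp (-p.1 * (‖p.2‖^2 + ‖ξ - p.2‖^2)))
      · rw [hmu]; exact hI
      · exact hmeas
      · rw [hmu]
        rw [ae_restrict_iff' ((measurableSet_Ioc).prod MeasurableSet.univ)]
        filter_upwards with p hp
        obtain ⟨hp1, -⟩ := hp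
        have h1 : Real.exp (-(t - p.1) * ‖ξ‖^2) ≤ 1 := by
          apply Real.exp_le_one_iff.mpr
          have : 0 ≤ t - p.1 := by linarith [hp1.2]
          have h2 := mul_nonneg this (sq_nonneg ‖ξ‖)
          linarith
        have hnorm : ‖G p‖ = Real.exp (-(t - p.1) * ‖ξ‖^2) *
            (|⟪p.2, ξ - p.2⟫| * ‖F (ξ - p.2)‖ * ‖F p.2‖ *
              Real.exp (-p.1 * (‖p.2‖^2 + ‖ξ - p.2‖^2))) := by
          simp only [hG_def, hP_def, norm_mul, Complex.norm_real, Real.norm_eq_abs,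
            Real.abs_exp, abs_neg]
          try ring
        rw [hnorm]
        calc Real.exp (-(t - p.1) * ‖ξ‖^2) *
            (|⟪p.2, ξ - p.2⟫| * ‖F (ξ - p.2)‖ * ‖F p.2‖ *
              Real.exp (-p.1 * (‖p.2‖^2 + ‖ξ - p.2‖^2)))
            ≤ 1 * (|⟪p.2, ξ - p.2⟫| * ‖F (ξ - p.2)‖ * ‖F p.2‖ *
              Real.exp (-p.1 * (‖p.2‖^2 + ‖ξ - p.2‖^2))) := by
              apply mul_le_mul_of_nonneg_right h1
              positivity
          _ = ‖F (ξ - p.2)‖ * ‖F p.2‖ * |⟪p.2, ξ - p.2⟫| *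
              Real.exp (-p.1 * (‖p.2‖^2 + ‖ξ - p.2‖^2)) := by ring
    -- rewrite LHS as double integral over restricted measure
    have hswap := integral_integral_swap (f := fun (τ : ℝ) (η : EuclideanSpace ℝ (Fin d)) => G (τ, η)) hGint
    calc (∫ τ in (0:ℝ)..t, ((Real.exp (-(t-τ) * ‖ξ‖^2) : ℝ) : ℂ) *
          ∫ η, ((-(⟪η, ξ - η⟫) : ℝ) : ℂ) * F (ξ - η) * F η *
            ((Real.exp (-τ * (‖η‖^2 + ‖ξ - η‖^2)) : ℝ) : ℂ))
        = ∫ τ in Set.Ioc (0:ℝ) t, ∫ η, G (τ, η) := by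
          rw [intervalIntegral.integral_of_le ht]
          apply integral_congr_ae
          filter_upwards with τ
          rw [← integral_const_mul]
      _ = ∫ η, ∫ τ in Set.Ioc (0:ℝ) t, G (τ, η) := hswap
      _ = ∫ η, ((1/2 : ℝ) : ℂ) * F (ξ - η) * F η *
          ((Real.exp (-t * ‖ξ‖^2) : ℝ) : ℂ) *
          ((1:ℂ) - ((Real.exp (2*t*⟪η, ξ - η⟫) : ℝ) : ℂ)) := by
          apply integral_congr_ae
          filter_upwards with η
          rw [← intervalIntegral.integral_of_le ht]
          have : ∀ τ : ℝ, G (τ, η) =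
              ((Real.exp (-(t-τ) * ‖ξ‖^2) * (-(⟪η, ξ - η⟫)) *
                Real.exp (-τ * (‖η‖^2 + ‖ξ - η‖^2)) : ℝ) : ℂ) * (F (ξ - η) * F η) := by
            intro τ
            simp only [hG_def, hP_def]
            push_cast
            ring
          rw [intervalIntegral.integral_congr (g := fun τ =>
              ((Real.exp (-(t-τ) * ‖ξ‖^2) * (-(⟪η, ξ - η⟫)) *
                Real.exp (-τ * (‖η‖^2 + ‖ξ - η‖^2)) : ℝ) : ℂ) * (F (ξ - η) * F η))
            (fun τ _ => this τ)]
          rw [intervalIntegral.integral_mul_const, intervalIntegral.integral_ofReal,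
            stmt10_part1 d t ξ η]
          push_cast
          ring
  · -- non-measurable case: both sides are zero
    have hin : ∀ τ : ℝ, (∫ η, ((-(⟪η, ξ - η⟫) : ℝ) : ℂ) * F (ξ - η) * F η *
        ((Real.exp (-τ * (‖η‖^2 + ‖ξ - η‖^2)) : ℝ) : ℂ)) = 0 := by
      intro τ
      apply integral_undef
      intro hInt
      apply hP
      have hm := hInt.aestronglyMeasurable
      have : P = fun η => (((-(⟪η, ξ - η⟫) : ℝ) : ℂ) * F (ξ - η) * F η *
          ((Real.exp (-τ * (‖η‖^2 + ‖ξ - η‖^2)) : ℝ) : ℂ)) *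
          ((Real.exp (τ * (‖η‖^2 + ‖ξ - η‖^2)) : ℝ) : ℂ) := by
        funext η
        have hexp : Real.exp (-τ * (‖η‖^2 + ‖ξ - η‖^2)) *
            Real.exp (τ * (‖η‖^2 + ‖ξ - η‖^2)) = 1 := by
          rw [← Real.exp_add]; ring_nf; exact Real.exp_zero
        simp only [hP_def]
        push_cast
        rw [mul_assoc, mul_assoc]
        norm_cast
        rw [hexp]
        push_cast
        ring
      rw [this]
      exact hm.mul (Continuous.aestronglyMeasurable (by fun_prop))
    have hrhs : (∫ η, ((1/2 : ℝ) : ℂ) * F (ξ - η) * F η *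
          ((Real.exp (-t * ‖ξ‖^2) : ℝ) : ℂ) *
          ((1:ℂ) - ((Real.exp (2*t*⟪η, ξ - η⟫) : ℝ) : ℂ))) = 0 := by
      apply integral_undef
      intro hInt
      apply hP
      have hm := hInt.aestronglyMeasurable
      set h : EuclideanSpace ℝ (Fin d) → ℂ := fun η => if ⟪η, ξ - η⟫ = (0:ℝ) then 0 else
        (((-2*⟪η, ξ - η⟫ * Real.exp (t * ‖ξ‖^2) /
          (1 - Real.exp (2*t*⟪η, ξ - η⟫))) : ℝ) : ℂ) with hh_def
      have hminner : Measurable fun η : EuclideanSpace ℝ (Fin d) => (⟪η, ξ - η⟫ : ℝ) :=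
        (continuous_id.inner (continuous_const.sub continuous_id)).measurable
      have hhm : Measurable h := by
        apply Measurable.ite
        · exact measurableSet_eq_fun hminner measurable_const
        · fun_prop
        · fun_prop
      have hPeq : P = fun η => (((1/2 : ℝ) : ℂ) * F (ξ - η) * F η *
          ((Real.exp (-t * ‖ξ‖^2) : ℝ) : ℂ) *
          ((1:ℂ) - ((Real.exp (2*t*⟪η, ξ - η⟫) : ℝ) : ℂ))) * h η := by
        funext η
        by_cases ha : ⟪η, ξ - η⟫ = (0:ℝ)
        · have hz : P η = 0 := by
            simp only [hP_def]
            rw [ha]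
            norm_num
          rw [hz, hh_def]
          simp only [if_pos ha, mul_zero]
        · have hne : 1 - Real.exp (2*t*⟪η, ξ - η⟫) ≠ 0 := by
            intro hc
            have he1 : Real.exp (2*t*⟪η, ξ - η⟫) = 1 := by linarith
            have h2 : 2*t*⟪η, ξ - η⟫ = 0 := by simpa using he1
            rcases mul_eq_zero.mp h2 with h3 | h3
            · rcases mul_eq_zero.mp h3 with h4 | h4
              · norm_num at h4
              · exact absurd h4 (ne_of_gt h0)
            · exact ha h3
          have hexp : Real.exp (-t * ‖ξ‖^2) * Real.exp (t * ‖ξ‖^2) = 1 := by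
            rw [← Real.exp_add]; ring_nf; exact Real.exp_zero
          simp only [hP_def, hh_def, if_neg ha]
          have keyR : (1/2 : ℝ) * Real.exp (-t * ‖ξ‖^2) *
              (1 - Real.exp (2*t*⟪η, ξ - η⟫)) *
              (-2*⟪η, ξ - η⟫ * Real.exp (t * ‖ξ‖^2) /
                (1 - Real.exp (2*t*⟪η, ξ - η⟫)))
              = -(⟪η, ξ - η⟫) := by
            have hstep : (1/2 : ℝ) * Real.exp (-t * ‖ξ‖^2) *
                (1 - Real.exp (2*t*⟪η, ξ - η⟫)) *
                (-2*⟪η, ξ - η⟫ * Real.exp (t * ‖ξ‖^2) /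
                  (1 - Real.exp (2*t*⟪η, ξ - η⟫)))
                = -(⟪η, ξ - η⟫) * (Real.exp (-t * ‖ξ‖^2) * Real.exp (t * ‖ξ‖^2)) *
                  ((1 - Real.exp (2*t*⟪η, ξ - η⟫)) *
                    (1 - Real.exp (2*t*⟪η, ξ - η⟫))⁻¹) := by
              rw [div_eq_mul_inv]; ring
            rw [hstep, mul_inv_cancel₀ hne, hexp, mul_one, mul_one]
          have key : ((1/2 : ℝ) : ℂ) * ((Real.exp (-t * ‖ξ‖^2) : ℝ) : ℂ) *
              ((1:ℂ) - ((Real.exp (2*t*⟪η, ξ - η⟫) : ℝ) : ℂ)) *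
              (((-2*⟪η, ξ - η⟫ * Real.exp (t * ‖ξ‖^2) /
                (1 - Real.exp (2*t*⟪η, ξ - η⟫))) : ℝ) : ℂ)
              = ((-(⟪η, ξ - η⟫) : ℝ) : ℂ) := by
            rw [← keyR]
            push_cast
            ring
          calc ((-(⟪η, ξ - η⟫) : ℝ) : ℂ) * F (ξ - η) * F η
              = (((1/2 : ℝ) : ℂ) * ((Real.exp (-t * ‖ξ‖^2) : ℝ) : ℂ) *
                ((1:ℂ) - ((Real.exp (2*t*⟪η, ξ - η⟫) : ℝ) : ℂ)) *
                (((-2*⟪η, ξ - η⟫ * Real.exp (t * ‖ξ‖^2) /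
                  (1 - Real.exp (2*t*⟪η, ξ - η⟫))) : ℝ) : ℂ)) * F (ξ - η) * F η := by
                rw [key]
            _ = _ := by ring
      rw [hPeq]
      exact hm.mul hhm.aestronglyMeasurable
    rw [hrhs]
    simp only [hin, mul_zero]
    simp


/-- the explicit Duhamel/Fourier computation for the second iterate
`A₂(f)(t) = ∫₀ᵗ e^{(t−τ)Δ} Σᵢ (∂ᵢ e^{τΔ}f)² dτ`. First, the pointwise τ-integral
identity `∫₀ᵗ e^{-(t-τ)|ξ|²} (−η·(ξ−η)) e^{-τ(|η|²+|ξ−η|²)} dτ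
 = (1/2) e^{-t|ξ|²} (1 − e^{2t η·(ξ−η)})` (using `Σᵢ ηᵢ(ξᵢ−ηᵢ) = η·(ξ−η)` and
`|η|²+|ξ−η|²−|ξ|² = −2η·(ξ−η)`); consequently, under an integrability hypothesis
allowing Fubini, the Fourier transform of `A₂(f)(t)` at `ξ`, i.e.
`∫₀ᵗ e^{-(t-τ)|ξ|²} ∫ (−η·(ξ−η)) f̂(ξ−η) f̂(η) e^{-τ(|η|²+|ξ−η|²)} dη dτ`, equals
`(1/2) ∫ f̂(ξ−η) f̂(η) e^{-t|ξ|²} (1 − e^{2tη·(ξ−η)}) dη`. -/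
theorem stmt10 (d : ℕ) (hd : 1 ≤ d) :
    (∀ (t : ℝ) (ξ η : EuclideanSpace ℝ (Fin d)),
      (∫ τ in (0:ℝ)..t, Real.exp (-(t-τ) * ‖ξ‖^2) * (-(⟪η, ξ - η⟫)) *
          Real.exp (-τ * (‖η‖^2 + ‖ξ - η‖^2))) =
        (1/2) * Real.exp (-t * ‖ξ‖^2) * (1 - Real.exp (2*t*⟪η, ξ - η⟫))) ∧
    (∀ (t : ℝ), 0 ≤ t → ∀ (F : EuclideanSpace ℝ (Fin d) → ℂ)
      (ξ : EuclideanSpace ℝ (Fin d)),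
      IntegrableOn (fun p : ℝ × EuclideanSpace ℝ (Fin d) =>
          ‖F (ξ - p.2)‖ * ‖F p.2‖ * |⟪p.2, ξ - p.2⟫| *
            Real.exp (-p.1 * (‖p.2‖^2 + ‖ξ - p.2‖^2)))
        (Set.Ioc 0 t ×ˢ Set.univ) (volume.prod volume) →
      (∫ τ in (0:ℝ)..t, ((Real.exp (-(t-τ) * ‖ξ‖^2) : ℝ) : ℂ) *
          ∫ η, ((-(⟪η, ξ - η⟫) : ℝ) : ℂ) * F (ξ - η) * F η *
            ((Real.exp (-τ * (‖η‖^2 + ‖ξ - η‖^2)) : ℝ) : ℂ)) =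
        ∫ η, ((1/2 : ℝ) : ℂ) * F (ξ - η) * F η *
          ((Real.exp (-t * ‖ξ‖^2) : ℝ) : ℂ) *
          ((1:ℂ) - ((Real.exp (2*t*⟪η, ξ - η⟫) : ℝ) : ℂ))) := by
  exact ⟨stmt10_part1 d, stmt10_part2 d⟩
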